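/- arXiv:0901.2695 — 2 statements merged into one kernel-verified Lean document; each statement's English description precedes it below -/
import Mathlib

section
/- Let A be a unital C*-algebra with a Lipschitz seminorm L (a seminorm, possibly +∞-valued, whose null space is exactly the scalar multiples of the identity and with L(a*)=L(a)). Define ρ_L(φ,ψ) = sup{|φ(a)-ψ(a)| : L(a) ≤ 1} on S(A) and L_{ρ_L}(a) = sup{|φ(a)-ψ(a)|/ρ_L(φ,ψ) : φ ≠ ψ ∈ S(A)}. If L is lower semicontinuous (the set {a : L(a) ≤ 1} is norm-closed), then L_{ρ_L}(a) ≤ L(a) ≤ 2 L_{ρ_L}(a) for all a ∈ A. -/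
open scoped ENNReal NNReal ComplexOrder

noncomputable section

section Defs

variable {A : Type*} [NormedRing A] [StarRing A] [CStarRing A]
  [NormedAlgebra ℂ A] [StarModule ℂ A] [CompleteSpace A]

/-- A state on a unital C*-algebra: a continuous linear functional that is unital and positive. -/
def IsState (φ : A →L[ℂ] ℂ) : Prop :=
  φ 1 = 1 ∧ ∀ a : A, 0 ≤ φ (star a * a)

/-- The metric `ρ_L` on the dual induced by a seminorm `L`. -/
def rho (L : A → ℝ≥0∞) (φ ψ : A →L[ℂ] ℂ) : ℝ≥0∞ :=
  ⨆ a : {a : A // L a ≤ 1}, (‖φ a.1 - ψ a.1‖₊ : ℝ≥0∞)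

/-- The weak*-topology on the state space. -/
def weakStarTop (A : Type*) [NormedRing A] [StarRing A] [CStarRing A]
    [NormedAlgebra ℂ A] [StarModule ℂ A] [CompleteSpace A] :
    TopologicalSpace {φ : A →L[ℂ] ℂ // IsState φ} :=
  TopologicalSpace.induced (fun φ => (fun a => φ.1 a : A → ℂ)) inferInstance

/-- The metric `ρ_L` induces the weak*-topology on the state space. -/
def InducesWeakStar (L : A → ℝ≥0∞) : Prop :=
  ∀ φ : {φ : A →L[ℂ] ℂ // IsState φ},
    @nhds _ (weakStarTop A) φ =
      ⨅ (ε : ℝ≥0∞) (_ : 0 < ε),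
        Filter.principal {ψ : {φ : A →L[ℂ] ℂ // IsState φ} | rho L φ.1 ψ.1 < ε}

/-- A Lip-norm on a unital C*-algebra: a (possibly `∞`-valued) seminorm vanishing at `1`,
star-invariant, whose induced metric gives the state space the weak*-topology. -/
structure IsLipNorm (L : A → ℝ≥0∞) : Prop where
  add_le : ∀ a b : A, L (a + b) ≤ L a + L b
  smul_eq : ∀ (c : ℂ) (a : A), L (c • a) = (‖c‖₊ : ℝ≥0∞) * L a
  one_eq : L 1 = 0
  star_eq : ∀ a : A, L (star a) = L a
  induces : InducesWeakStar L

/-- The Leibniz rule for a seminorm. -/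
def IsLeibniz (L : A → ℝ≥0∞) : Prop :=
  ∀ a b : A, L (a * b) ≤ L a * (‖b‖₊ : ℝ≥0∞) + (‖a‖₊ : ℝ≥0∞) * L b

end Defs

/-- The seminorm `L_{ρ_L}` recovered from the metric `ρ_L` on the state space. -/
def Lrho {A : Type*} [NormedRing A] [StarRing A] [CStarRing A]
    [NormedAlgebra ℂ A] [StarModule ℂ A] [CompleteSpace A]
    (L : A → ℝ≥0∞) (a : A) : ℝ≥0∞ :=
  ⨆ p : {p : (A →L[ℂ] ℂ) × (A →L[ℂ] ℂ) // IsState p.1 ∧ IsState p.2 ∧ p.1 ≠ p.2},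
    (‖p.1.1 a - p.1.2 a‖₊ : ℝ≥0∞) / rho L p.1.1 p.1.2

namespace Stmt5Aux

variable {A : Type*} [NormedRing A] [StarRing A] [CStarRing A]
  [NormedAlgebra ℂ A] [StarModule ℂ A] [CompleteSpace A]

instance : CStarAlgebra A := {}

noncomputable instance : PartialOrder A := CStarAlgebra.spectralOrder A

instance : StarOrderedRing A := CStarAlgebra.spectralOrderedRing A

lemma rsmul_nonneg {r : ℝ} (hr : 0 ≤ r) {x : A} (hx : 0 ≤ x) : 0 ≤ r • x := by
  rw [StarOrderedRing.nonneg_iff] at hx ⊢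
  induction hx using AddSubmonoid.closure_induction with
  | mem y hy =>
      obtain ⟨s, rfl⟩ := hy
      apply AddSubmonoid.subset_closure
      refine ⟨(Real.sqrt r : ℂ) • s, ?_⟩
      show star ((Real.sqrt r : ℂ) • s) * ((Real.sqrt r : ℂ) • s) = r • (star s * s)
      rw [star_smul, smul_mul_smul_comm, Complex.star_def, Complex.conj_ofReal,
        ← Complex.ofReal_mul, Real.mul_self_sqrt hr, Complex.coe_smul]
  | zero => simpa using AddSubmonoid.zero_mem _
  | add y z _ _ hy hz => simpa [smul_add] using AddSubmonoid.add_mem _ hy hz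

lemma rsmul_le_rsmul {r : ℝ} (hr : 0 ≤ r) {x y : A} (hxy : x ≤ y) : r • x ≤ r • y := by
  have := rsmul_nonneg hr (sub_nonneg.mpr hxy)
  rw [smul_sub] at this
  exact sub_nonneg.mp this

/-- an order-theoretic substitute for `max 0 (sup spectrum)`. -/
def sig (u : A) : ℝ := sInf {c : ℝ | 0 ≤ c ∧ u ≤ c • (1 : A)}

lemma sig_mem_norm {u : A} (hu : IsSelfAdjoint u) :
    ‖u‖ ∈ {c : ℝ | 0 ≤ c ∧ u ≤ c • (1 : A)} := by
  refine ⟨norm_nonneg u, ?_⟩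
  have := hu.le_algebraMap_norm_self
  rwa [Algebra.algebraMap_eq_smul_one] at this

lemma sigSet_nonempty {u : A} (hu : IsSelfAdjoint u) :
    {c : ℝ | 0 ≤ c ∧ u ≤ c • (1 : A)}.Nonempty := ⟨‖u‖, sig_mem_norm hu⟩

lemma sigSet_bdd (u : A) : BddBelow {c : ℝ | 0 ≤ c ∧ u ≤ c • (1 : A)} :=
  ⟨0, fun _ hc => hc.1⟩

lemma sig_nonneg {u : A} (hu : IsSelfAdjoint u) : 0 ≤ sig u :=
  le_csInf (sigSet_nonempty hu) fun _ hc => hc.1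

lemma sig_le_norm {u : A} (hu : IsSelfAdjoint u) : sig u ≤ ‖u‖ :=
  csInf_le (sigSet_bdd u) (sig_mem_norm hu)

lemma sig_eq_norm_of_nonneg [Nontrivial A] {x : A} (hx : 0 ≤ x) : sig x = ‖x‖ := by
  refine le_antisymm (sig_le_norm hx.isSelfAdjoint) (le_csInf (sigSet_nonempty hx.isSelfAdjoint) ?_)
  rintro c ⟨hc0, hc⟩
  have h1 : ‖x‖ ≤ ‖c • (1 : A)‖ := CStarAlgebra.norm_le_norm_of_nonneg_of_le hx hc
  rwa [norm_smul, CStarRing.norm_one, mul_one, Real.norm_eq_abs, abs_of_nonneg hc0] at h1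

lemma sig_eq_zero_of_nonpos {u : A} (h : u ≤ 0) : sig u = 0 := by
  have hu : IsSelfAdjoint u := by
    have h' : IsSelfAdjoint (-u) := (neg_nonneg.mpr h).isSelfAdjoint
    simpa using h'.neg
  refine le_antisymm (csInf_le (sigSet_bdd u) ⟨le_refl 0, by simpa using h⟩) (sig_nonneg hu)

lemma sig_zero : sig (0 : A) = 0 := sig_eq_zero_of_nonpos le_rfl

lemma sig_add {u v : A} (hu : IsSelfAdjoint u) (hv : IsSelfAdjoint v) :
    sig (u + v) ≤ sig u + sig v := by
  have key : ∀ c ∈ {c : ℝ | 0 ≤ c ∧ u ≤ c • (1 : A)},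
      ∀ d ∈ {c : ℝ | 0 ≤ c ∧ v ≤ c • (1 : A)}, sig (u + v) ≤ c + d := by
    rintro c ⟨hc0, hc⟩ d ⟨hd0, hd⟩
    refine csInf_le (sigSet_bdd _) ⟨add_nonneg hc0 hd0, ?_⟩
    rw [add_smul]
    exact add_le_add hc hd
  have h1 : ∀ c ∈ {c : ℝ | 0 ≤ c ∧ u ≤ c • (1 : A)}, sig (u + v) - c ≤ sig v := fun c hc =>
    le_csInf (sigSet_nonempty hv) fun d hd => by have := key c hc d hd; linarith
  have h2 : sig (u + v) - sig v ≤ sig u :=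
    le_csInf (sigSet_nonempty hu) fun c hc => by have := h1 c hc; linarith
  linarith

lemma sig_smul_le {r : ℝ} (hr : 0 < r) {u : A} (hu : IsSelfAdjoint u) :
    sig (r • u) ≤ r * sig u := by
  have key : ∀ c ∈ {c : ℝ | 0 ≤ c ∧ u ≤ c • (1 : A)}, sig (r • u) ≤ r * c := by
    rintro c ⟨hc0, hc⟩
    refine csInf_le (sigSet_bdd _) ⟨by positivity, ?_⟩
    have := rsmul_le_rsmul hr.le hc
    rwa [smul_smul] at this
  have h1 : sig (r • u) / r ≤ sig u :=
    le_csInf (sigSet_nonempty hu) fun c hc => (div_le_iff₀ hr).mpr (by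
      have := key c hc; linarith [mul_comm r c])
  calc sig (r • u) = r * (sig (r • u) / r) := by field_simp
    _ ≤ r * sig u := mul_le_mul_of_nonneg_left h1 hr.le

lemma sig_smul {r : ℝ} (hr : 0 < r) {u : A} (hu : IsSelfAdjoint u) :
    sig (r • u) = r * sig u := by
  refine le_antisymm (sig_smul_le hr hu) ?_
  have hru : IsSelfAdjoint (r • u) := IsSelfAdjoint.smul (star_trivial r) hu
  have := sig_smul_le (by positivity : (0:ℝ) < r⁻¹) hru
  rw [smul_smul, inv_mul_cancel₀ hr.ne', one_smul] at this
  calc r * sig u ≤ r * (r⁻¹ * sig (r • u)) := mul_le_mul_of_nonneg_left this hr.le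
    _ = sig (r • u) := by field_simp

/-- the self-adjoint (real) part. -/
def saPart (x : A) : A := (2 : ℝ)⁻¹ • (x + star x)

lemma saPart_isSelfAdjoint (x : A) : IsSelfAdjoint (saPart x) := by
  unfold saPart
  rw [IsSelfAdjoint, star_smul, star_trivial, star_add, star_star, add_comm]

lemma saPart_add (x y : A) : saPart (x + y) = saPart x + saPart y := by
  unfold saPart
  rw [star_add, ← smul_add]
  ring_nf
  congr 1
  abel

lemma saPart_rsmul (r : ℝ) (x : A) : saPart (r • x) = r • saPart x := by
  unfold saPart
  rw [star_smul, star_trivial, ← smul_add, smul_comm]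

lemma saPart_neg (x : A) : saPart (-x) = -saPart x := by
  unfold saPart
  rw [star_neg, ← neg_add, smul_neg]

lemma saPart_of_isSelfAdjoint {x : A} (hx : IsSelfAdjoint x) : saPart x = x := by
  unfold saPart
  rw [hx.star_eq, ← two_smul ℝ x, smul_smul, inv_mul_cancel₀ (two_ne_zero), one_smul]

lemma saPart_of_skew {x : A} (hx : star x = -x) : saPart x = 0 := by
  unfold saPart
  rw [hx, add_neg_cancel, smul_zero]

lemma norm_saPart_le (x : A) : ‖saPart x‖ ≤ ‖x‖ := by
  unfold saPart
  rw [norm_smul]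
  calc ‖(2:ℝ)⁻¹‖ * ‖x + star x‖ ≤ (2:ℝ)⁻¹ * (‖x‖ + ‖star x‖) := by
        rw [Real.norm_eq_abs, abs_of_nonneg (by norm_num)]
        have := norm_add_le x (star x)
        nlinarith [norm_nonneg (x + star x)]
    _ = ‖x‖ := by rw [norm_star]; ring


lemma exists_pos_dominating [Nontrivial A] (γ : A →L[ℝ] ℝ) :
    ∃ φ₀ : A →L[ℝ] ℝ, (∀ x : A, 0 ≤ x → γ x ≤ φ₀ x) ∧ (∀ x : A, 0 ≤ x → 0 ≤ φ₀ x) ∧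
      (∀ z : A, star z = -z → φ₀ z = 0) := by
  classical
  set c₀ : ℝ := ‖γ‖ with hc₀
  have hc₀0 : 0 ≤ c₀ := norm_nonneg _
  set p : A → ℝ := fun z => c₀ * sig (saPart z) with hp
  have hsa : ∀ z : A, IsSelfAdjoint (saPart z) := saPart_isSelfAdjoint
  have hp_nonneg : ∀ z, 0 ≤ p z := fun z => mul_nonneg hc₀0 (sig_nonneg (hsa z))
  have hp_add : ∀ z w, p (z + w) ≤ p z + p w := by
    intro z w
    simp only [hp, saPart_add, ← mul_add]
    exact mul_le_mul_of_nonneg_left (sig_add (hsa z) (hsa w)) hc₀0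
  have hp_smul : ∀ r : ℝ, 0 < r → ∀ z, p (r • z) = r * p z := by
    intro r hr z
    simp only [hp, saPart_rsmul, sig_smul hr (hsa z)]
    ring
  have hp_zero : p 0 = 0 := by simp [hp, saPart_of_skew (by simp : star (0:A) = -0), sig_zero]
  have hp_nonpos : ∀ x : A, 0 ≤ x → p (-x) = 0 := by
    intro x hx
    have hsax : saPart (-x) = -x := saPart_of_isSelfAdjoint hx.isSelfAdjoint.neg
    simp [hp, hsax, sig_eq_zero_of_nonpos (neg_nonpos.mpr hx)]
  have hp_skew : ∀ z : A, star z = -z → p z = 0 := by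
    intro z hz; simp [hp, saPart_of_skew hz, sig_zero]
  have hγp : ∀ x : A, 0 ≤ x → γ x ≤ p x := by
    intro x hx
    calc γ x ≤ ‖γ x‖ := le_abs_self _
      _ ≤ ‖γ‖ * ‖x‖ := γ.le_opNorm x
      _ = c₀ * sig (saPart x) := by
          rw [saPart_of_isSelfAdjoint hx.isSelfAdjoint, sig_eq_norm_of_nonneg hx]
  set S : A → Set ℝ := fun z => {y | ∃ x : A, 0 ≤ x ∧ y = p (z + x) - γ x} with hS
  have hSne : ∀ z, (S z).Nonempty := fun z => ⟨p z, 0, le_refl 0, by simp⟩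
  have hSlb : ∀ z, ∀ y ∈ S z, -(p (-z)) ≤ y := by
    rintro z y ⟨x, hx, rfl⟩
    have h1 : p x ≤ p (z + x) + p (-z) := by
      have h := hp_add (z + x) (-z)
      have he : z + x + -z = x := by abel
      rwa [he] at h
    have h2 := hγp x hx
    linarith
  have hSbdd : ∀ z, BddBelow (S z) := fun z => ⟨-(p (-z)), fun y hy => hSlb z y hy⟩
  set Q : A → ℝ := fun z => sInf (S z) with hQ
  have hQ_le : ∀ z (x : A), 0 ≤ x → Q z ≤ p (z + x) - γ x := fun z x hx =>
    csInf_le (hSbdd z) ⟨x, hx, rfl⟩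
  have hQ_le_p : ∀ z, Q z ≤ p z := fun z => by
    have := hQ_le z 0 le_rfl
    simpa using this
  have hQ_add : ∀ z w, Q (z + w) ≤ Q z + Q w := by
    intro z w
    have key : ∀ y1 ∈ S z, ∀ y2 ∈ S w, Q (z + w) ≤ y1 + y2 := by
      rintro _ ⟨x, hx, rfl⟩ _ ⟨x', hx', rfl⟩
      have hmem : (0:A) ≤ x + x' := add_nonneg hx hx'
      have h1 := hQ_le (z + w) (x + x') hmem
      have hpp : p (z + w + (x + x')) ≤ p (z + x) + p (w + x') := by
        have h := hp_add (z + x) (w + x')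
        have he : z + x + (w + x') = z + w + (x + x') := by abel
        rwa [he] at h
      have h2 : γ (x + x') = γ x + γ x' := map_add _ _ _
      linarith
    have h1 : ∀ y1 ∈ S z, Q (z + w) - y1 ≤ Q w := fun y1 hy1 =>
      le_csInf (hSne w) fun y2 hy2 => by have := key y1 hy1 y2 hy2; linarith
    have h2 : Q (z + w) - Q w ≤ Q z :=
      le_csInf (hSne z) fun y1 hy1 => by have := h1 y1 hy1; linarith
    linarith
  have hQ_smul_le : ∀ r : ℝ, 0 < r → ∀ z, Q (r • z) ≤ r * Q z := by
    intro r hr z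
    have key : ∀ y ∈ S z, Q (r • z) ≤ r * y := by
      rintro _ ⟨x, hx, rfl⟩
      have h0 : (0:A) ≤ r • x := rsmul_nonneg hr.le hx
      have h1 := hQ_le (r • z) (r • x) h0
      rw [← smul_add, hp_smul r hr, map_smul] at h1
      simp only [smul_eq_mul] at h1
      linarith
    have h1 : Q (r • z) / r ≤ Q z :=
      le_csInf (hSne z) fun y hy => (div_le_iff₀' hr).mpr (key y hy)
    calc Q (r • z) = r * (Q (r • z) / r) := by field_simp
      _ ≤ r * Q z := mul_le_mul_of_nonneg_left h1 hr.le
  have hQ_smul : ∀ r : ℝ, 0 < r → ∀ z, Q (r • z) = r * Q z := by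
    intro r hr z
    refine le_antisymm (hQ_smul_le r hr z) ?_
    have := hQ_smul_le r⁻¹ (by positivity) (r • z)
    rw [smul_smul, inv_mul_cancel₀ hr.ne', one_smul] at this
    calc r * Q z ≤ r * (r⁻¹ * Q (r • z)) := mul_le_mul_of_nonneg_left this hr.le
      _ = Q (r • z) := by field_simp
  have hQ0 : 0 ≤ Q 0 := by
    refine le_csInf (hSne 0) ?_
    rintro _ ⟨x, hx, rfl⟩
    have := hγp x hx
    simp only [zero_add]
    linarith
  obtain ⟨φ₀, -, hφle⟩ :=
    exists_extension_of_le_sublinear ((0 : A →ₗ[ℝ] ℝ).toPMap ⊥) Q hQ_smul hQ_add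
      (by rintro ⟨x, hx⟩
          have hx0 : x = 0 := (Submodule.mem_bot ℝ).mp hx
          simp [LinearMap.toPMap, hx0, hQ0])
  have hdom : ∀ x : A, 0 ≤ x → γ x ≤ φ₀ x := by
    intro x hx
    have h1 : φ₀ (-x) ≤ Q (-x) := hφle _
    have h2 : Q (-x) ≤ p (-x + x) - γ x := hQ_le (-x) x hx
    rw [neg_add_cancel, hp_zero] at h2
    rw [map_neg] at h1
    linarith
  have hpos : ∀ x : A, 0 ≤ x → 0 ≤ φ₀ x := by
    intro x hx
    have h1 : φ₀ (-x) ≤ Q (-x) := hφle _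
    have h2 : Q (-x) ≤ p (-x) := hQ_le_p _
    rw [hp_nonpos x hx] at h2
    rw [map_neg] at h1
    linarith
  have hskew : ∀ z : A, star z = -z → φ₀ z = 0 := by
    intro z hz
    have h1 : φ₀ z ≤ p z := (hφle z).trans (hQ_le_p z)
    have h2 : φ₀ (-z) ≤ p (-z) := (hφle _).trans (hQ_le_p _)
    have hz' : star (-z) = -(-z) := by rw [star_neg, hz, neg_neg]
    rw [hp_skew z hz] at h1
    rw [hp_skew (-z) hz', map_neg] at h2
    linarith
  have hbound : ∀ z : A, ‖φ₀ z‖ ≤ c₀ * ‖z‖ := by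
    intro z
    have key : ∀ w : A, φ₀ w ≤ c₀ * ‖w‖ := by
      intro w
      calc φ₀ w ≤ p w := (hφle w).trans (hQ_le_p w)
        _ = c₀ * sig (saPart w) := rfl
        _ ≤ c₀ * ‖saPart w‖ := mul_le_mul_of_nonneg_left (sig_le_norm (hsa w)) hc₀0
        _ ≤ c₀ * ‖w‖ := mul_le_mul_of_nonneg_left (norm_saPart_le w) hc₀0
    have h1 := key z
    have h2 := key (-z)
    rw [map_neg, norm_neg] at h2
    rw [Real.norm_eq_abs, abs_le]
    constructor <;> linarith
  exact ⟨LinearMap.mkContinuous φ₀ c₀ hbound, hdom, hpos, hskew⟩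


open Complex in
/-- The hermitian part of a continuous linear functional. -/
def hermPart (f : A →L[ℂ] ℂ) : A →L[ℂ] ℂ :=
  LinearMap.mkContinuous
    { toFun := fun x => (2 : ℂ)⁻¹ * (f x + starRingEnd ℂ (f (star x)))
      map_add' := by
        intro x y
        simp only [star_add, map_add]
        ring
      map_smul' := by
        intro c x
        simp only [star_smul, Complex.star_def, map_smul, smul_eq_mul, map_mul,
          Complex.conj_conj, RingHom.id_apply]
        ring }
    ‖f‖
    (by
      intro x
      simp only [LinearMap.coe_mk, AddHom.coe_mk]
      calc ‖(2 : ℂ)⁻¹ * (f x + starRingEnd ℂ (f (star x)))‖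
          = 2⁻¹ * ‖f x + starRingEnd ℂ (f (star x))‖ := by
            rw [norm_mul]; norm_num
        _ ≤ 2⁻¹ * (‖f x‖ + ‖f (star x)‖) := by
            have h := norm_add_le (f x) (starRingEnd ℂ (f (star x)))
            rw [RCLike.norm_conj] at h
            nlinarith [norm_nonneg (f x + starRingEnd ℂ (f (star x)))]
        _ ≤ 2⁻¹ * (‖f‖ * ‖x‖ + ‖f‖ * ‖star x‖) := by
            have h1 := f.le_opNorm x
            have h2 := f.le_opNorm (star x)
            nlinarith
        _ = ‖f‖ * ‖x‖ := by rw [norm_star]; ring)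

lemma hermPart_apply (f : A →L[ℂ] ℂ) (x : A) :
    hermPart f x = (2 : ℂ)⁻¹ * (f x + starRingEnd ℂ (f (star x))) := rfl

lemma hermPart_herm (f : A →L[ℂ] ℂ) (x : A) :
    hermPart f (star x) = starRingEnd ℂ (hermPart f x) := by
  simp only [hermPart_apply, star_star, map_mul, map_add, map_inv₀, Complex.conj_conj,
    map_ofNat]
  ring

lemma hermPart_one (f : A →L[ℂ] ℂ) (hf : f 1 = 0) : hermPart f 1 = 0 := by
  simp [hermPart_apply, hf]

lemma norm_hermPart_le (f : A →L[ℂ] ℂ) (x : A) :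
    ‖hermPart f x‖ ≤ 2⁻¹ * (‖f x‖ + ‖f (star x)‖) := by
  rw [hermPart_apply, norm_mul]
  have h := norm_add_le (f x) (starRingEnd ℂ (f (star x)))
  rw [RCLike.norm_conj] at h
  have : ‖(2:ℂ)⁻¹‖ = 2⁻¹ := by norm_num
  rw [this]
  nlinarith [norm_nonneg (f x + starRingEnd ℂ (f (star x)))]

lemma hermPart_decomp (f : A →L[ℂ] ℂ) (x : A) :
    f x = hermPart f x + Complex.I * hermPart ((-Complex.I) • f) x := by
  simp only [hermPart_apply, ContinuousLinearMap.smul_apply, smul_eq_mul, map_mul, map_neg,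
    Complex.conj_I, neg_neg]
  have hI : Complex.I * Complex.I = -1 := Complex.I_mul_I
  set c := starRingEnd ℂ (f (star x))
  linear_combination (2⁻¹ * f x - 2⁻¹ * c) * hI

lemma pos_functional_zero (θ : A →L[ℂ] ℂ) (hpos : ∀ x : A, 0 ≤ x → 0 ≤ θ x)
    (hherm : ∀ x, θ (star x) = starRingEnd ℂ (θ x)) (h1 : θ 1 = 0) : ∀ y, θ y = 0 := by
  intro y
  by_contra hy
  -- expansion of θ (star (c•1+y) * (c•1+y))
  have hexp : ∀ c : ℂ, star (c • (1:A) + y) * (c • (1:A) + y)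
      = (starRingEnd ℂ c * c) • (1:A) + (starRingEnd ℂ c) • y + c • star y + star y * y := by
    intro c
    rw [star_add, star_smul, star_one, Complex.star_def, add_mul, mul_add, mul_add,
      smul_mul_smul_comm, one_mul, smul_mul_assoc, one_mul, mul_smul_comm, mul_one]
    abel
  have key : ∀ c : ℂ, 0 ≤ 2 * (starRingEnd ℂ c * θ y).re + (θ (star y * y)).re := by
    intro c
    have h0 : (0:ℂ) ≤ θ (star (c • (1:A) + y) * (c • (1:A) + y)) :=
      hpos _ (star_mul_self_nonneg _)
    rw [hexp c] at h0
    simp only [map_add, map_smul, h1, smul_zero, smul_eq_mul, mul_zero, zero_add] at h0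
    have hy' : θ (star y) = starRingEnd ℂ (θ y) := hherm y
    rw [hy'] at h0
    have hre := (Complex.le_def.mp h0).1
    have : (starRingEnd ℂ c * θ y).re = (c * starRingEnd ℂ (θ y)).re := by
      have : c * starRingEnd ℂ (θ y) = starRingEnd ℂ (starRingEnd ℂ c * θ y) := by
        rw [map_mul, Complex.conj_conj]
      rw [this, Complex.conj_re]
    simp only [Complex.zero_re, Complex.add_re] at hre
    rw [← this] at hre
    linarith
  set R := (θ (star y * y)).re with hR
  have hnormSq : 0 < Complex.normSq (θ y) := by
    rw [Complex.normSq_pos]; exact hy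
  set s : ℝ := (R + 1) / Complex.normSq (θ y) with hs
  have hR0 : 0 ≤ R := by
    have h0 : (0:ℂ) ≤ θ (star y * y) := hpos _ (star_mul_self_nonneg _)
    have := (Complex.le_def.mp h0).1
    simpa [hR] using this
  have hkey := key (-(s : ℂ) * θ y)
  have hcalc : (starRingEnd ℂ (-(s:ℂ) * θ y) * θ y).re = -s * Complex.normSq (θ y) := by
    rw [map_mul, map_neg, Complex.conj_ofReal]
    have : starRingEnd ℂ (θ y) * θ y = (Complex.normSq (θ y) : ℂ) := by
      rw [mul_comm, Complex.mul_conj]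
    rw [mul_assoc, this]
    simp [Complex.ofReal_mul]
  rw [hcalc] at hkey
  have hspos : 0 < s := by positivity
  rw [hs] at hkey
  have : -2 * ((R + 1) / Complex.normSq (θ y)) * Complex.normSq (θ y) = -2 * (R + 1) := by
    field_simp
  nlinarith [this]


lemma herm_decomp [Nontrivial A] (g : A →L[ℂ] ℂ)
    (hherm : ∀ x, g (star x) = starRingEnd ℂ (g x)) (hg1 : g 1 = 0) :
    ∃ (φ' ψ' : A →L[ℂ] ℂ) (t : ℝ), 0 ≤ t ∧ g = φ' - ψ' ∧
      (∀ x : A, 0 ≤ x → 0 ≤ φ' x) ∧ (∀ x : A, 0 ≤ x → 0 ≤ ψ' x) ∧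
      (∀ x, φ' (star x) = starRingEnd ℂ (φ' x)) ∧
      (∀ x, ψ' (star x) = starRingEnd ℂ (ψ' x)) ∧
      φ' 1 = (t : ℂ) ∧ ψ' 1 = (t : ℂ) := by
  set γ : A →L[ℝ] ℝ := Complex.reCLM.comp (g.restrictScalars ℝ) with hγdef
  have hγ : ∀ x, γ x = (g x).re := fun _ => rfl
  obtain ⟨φ₀, hdom, hpos, hskew⟩ := exists_pos_dominating γ
  set Φ : A →L[ℂ] ℂ := φ₀.extendTo𝕜' with hΦdef
  have hΦ : ∀ x, Φ x = (φ₀ x : ℂ) - Complex.I * (φ₀ (Complex.I • x) : ℂ) := by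
    intro x
    have := ContinuousLinearMap.extendTo𝕜'_apply (𝕜 := ℂ) φ₀ x
    simpa using (show Φ x = _ from this)
  have hskewI : ∀ x : A, IsSelfAdjoint x → φ₀ (Complex.I • x) = 0 := by
    intro x hx
    apply hskew
    rw [star_smul, Complex.star_def, Complex.conj_I, neg_smul, hx.star_eq]
  have hΦsa : ∀ x : A, IsSelfAdjoint x → Φ x = (φ₀ x : ℂ) := by
    intro x hx
    rw [hΦ, hskewI x hx]
    simp
  -- hermitian property of Φ
  have hφ₀star : ∀ x : A, φ₀ (star x) = φ₀ x := by
    intro x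
    have h := hskew (star x - x) (by rw [star_sub, star_star]; abel)
    rw [map_sub] at h
    linarith
  have hφ₀Istar : ∀ x : A, φ₀ (Complex.I • star x) = -φ₀ (Complex.I • x) := by
    intro x
    have h := hskew (Complex.I • star x + Complex.I • x) (by
      rw [star_add, star_smul, star_smul, Complex.star_def, Complex.conj_I, star_star,
        neg_smul, neg_smul, neg_add, add_comm])
    rw [map_add] at h
    linarith
  have hΦherm : ∀ x, Φ (star x) = starRingEnd ℂ (Φ x) := by
    intro x
    rw [hΦ, hΦ, hφ₀star, hφ₀Istar]
    simp only [map_sub, map_mul, Complex.conj_I, Complex.conj_ofReal, Complex.ofReal_neg]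
    ring
  have hΦpos : ∀ x : A, 0 ≤ x → 0 ≤ Φ x := by
    intro x hx
    rw [hΦsa x hx.isSelfAdjoint]
    exact Complex.zero_le_real.mpr (hpos x hx)
  set ψ' : A →L[ℂ] ℂ := Φ - g with hψdef
  have hψherm : ∀ x, ψ' (star x) = starRingEnd ℂ (ψ' x) := by
    intro x
    simp only [hψdef, ContinuousLinearMap.sub_apply, map_sub, hΦherm, hherm]
  have hψpos : ∀ x : A, 0 ≤ x → 0 ≤ ψ' x := by
    intro x hx
    have hxsa : IsSelfAdjoint x := hx.isSelfAdjoint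
    have hgr : g x = ((g x).re : ℂ) := by
      have := hherm x
      rw [hxsa.star_eq] at this
      exact (Complex.conj_eq_iff_re.mp this.symm).symm
    have : ψ' x = ((φ₀ x - (g x).re : ℝ) : ℂ) := by
      simp only [hψdef, ContinuousLinearMap.sub_apply, hΦsa x hxsa, Complex.ofReal_sub]
      conv_lhs => rw [hgr]
    rw [this]
    refine Complex.zero_le_real.mpr ?_
    have := hdom x hx
    rw [hγ] at this
    linarith
  have h1pos : (0:A) ≤ 1 := by simpa using star_mul_self_nonneg (1 : A)
  refine ⟨Φ, ψ', φ₀ 1, hpos 1 h1pos, by rw [hψdef]; abel, hΦpos, hψpos, hΦherm, hψherm,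
    hΦsa 1 (IsSelfAdjoint.one A), ?_⟩
  simp only [hψdef, ContinuousLinearMap.sub_apply, hg1, sub_zero, hΦsa 1 (IsSelfAdjoint.one A)]


lemma herm_bound [Nontrivial A] (L : A → ℝ≥0∞)
    (hsmul : ∀ (c : ℂ) (a : A), L (c • a) = (‖c‖₊ : ℝ≥0∞) * L a)
    {a : A} {M : ℝ≥0∞} (hM : M ≠ ⊤) (hLrho : Lrho L a ≤ M) {r : ℝ} (hr : 0 < r)
    (θ : A →L[ℂ] ℂ) (hherm : ∀ x, θ (star x) = starRingEnd ℂ (θ x)) (hθ1 : θ 1 = 0)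
    (hθb : ∀ b : A, L b ≤ ENNReal.ofReal r → ‖θ b‖ ≤ 1) :
    ‖θ a‖ ≤ M.toReal / r := by
  have hMr : 0 ≤ M.toReal / r := by positivity
  by_cases hθ0 : θ = 0
  · simpa [hθ0] using hMr
  obtain ⟨φ', ψ', t, ht0, hdecomp, hφpos, hψpos, hφherm, hψherm, hφ1, hψ1⟩ :=
    herm_decomp (g := θ) hherm hθ1
  rcases eq_or_lt_of_le ht0 with ht | ht
  · exfalso
    apply hθ0
    have hφz := pos_functional_zero φ' hφpos hφherm (by rw [hφ1, ← ht]; simp)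
    have hψz := pos_functional_zero ψ' hψpos hψherm (by rw [hψ1, ← ht]; simp)
    ext x
    rw [hdecomp]
    simp [hφz x, hψz x]
  · set φ : A →L[ℂ] ℂ := ((t : ℂ)⁻¹) • φ' with hφdef
    set ψ : A →L[ℂ] ℂ := ((t : ℂ)⁻¹) • ψ' with hψdef
    have htne : (t : ℂ) ≠ 0 := by
      simpa using ht.ne'
    have htinv : (0:ℝ) ≤ t⁻¹ := by positivity
    have hinvpos : (0:ℂ) ≤ ((t:ℝ)⁻¹ : ℝ) := Complex.zero_le_real.mpr htinv
    have hcast : ((t : ℂ))⁻¹ = (((t:ℝ)⁻¹ : ℝ) : ℂ) := by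
      push_cast
      ring
    have hφstate : IsState φ := by
      constructor
      · rw [hφdef]
        simp only [ContinuousLinearMap.smul_apply, hφ1, smul_eq_mul]
        exact inv_mul_cancel₀ htne
      · intro b
        rw [hφdef]
        simp only [ContinuousLinearMap.smul_apply, smul_eq_mul]
        rw [hcast]
        exact mul_nonneg hinvpos (hφpos _ (star_mul_self_nonneg b))
    have hψstate : IsState ψ := by
      constructor
      · rw [hψdef]
        simp only [ContinuousLinearMap.smul_apply, hψ1, smul_eq_mul]
        exact inv_mul_cancel₀ htne
      · intro b
        rw [hψdef]
        simp only [ContinuousLinearMap.smul_apply, smul_eq_mul]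
        rw [hcast]
        exact mul_nonneg hinvpos (hψpos _ (star_mul_self_nonneg b))
    have hφψne : φ ≠ ψ := by
      intro h
      apply hθ0
      have hφψ : φ' = ψ' := by
        have := congrArg (fun (F : A →L[ℂ] ℂ) => (t : ℂ) • F) h
        simpa [hφdef, hψdef, smul_smul, mul_inv_cancel₀ htne] using this
      rw [hdecomp, hφψ, sub_self]
    have hθab : ∀ b : A, θ b = (t : ℂ) * (φ b - ψ b) := by
      intro b
      rw [hdecomp]
      simp only [ContinuousLinearMap.sub_apply, hφdef, hψdef,
        ContinuousLinearMap.smul_apply, smul_eq_mul]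
      field_simp
    have hθnorm : ∀ b : A, ‖φ b - ψ b‖ = t⁻¹ * ‖θ b‖ := by
      intro b
      rw [hθab b, norm_mul]
      have : ‖(t:ℂ)‖ = t := by
        rw [Complex.norm_real, Real.norm_eq_abs, abs_of_pos ht]
      rw [this]
      field_simp
    have hρ : rho L φ ψ ≤ ENNReal.ofReal (1 / (t * r)) := by
      apply iSup_le
      rintro ⟨b, hb⟩
      have hLrb : L ((r : ℂ) • b) ≤ ENNReal.ofReal r := by
        rw [hsmul]
        have h1 : (‖(r : ℂ)‖₊ : ℝ≥0∞) = ENNReal.ofReal r := by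
          rw [← enorm_eq_nnnorm, ← ofReal_norm, Complex.norm_real, Real.norm_eq_abs,
            abs_of_pos hr]
        rw [h1]
        calc ENNReal.ofReal r * L b ≤ ENNReal.ofReal r * 1 := mul_le_mul_right hb _
          _ = ENNReal.ofReal r := mul_one _
      have h1 : ‖θ ((r : ℂ) • b)‖ ≤ 1 := hθb _ hLrb
      have h2 : ‖θ b‖ ≤ 1 / r := by
        rw [map_smul, smul_eq_mul, norm_mul, Complex.norm_real, Real.norm_eq_abs,
          abs_of_pos hr] at h1
        rw [le_div_iff₀ hr]
        linarith [mul_comm r ‖θ b‖]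
      calc (‖φ b - ψ b‖₊ : ℝ≥0∞) = ENNReal.ofReal ‖φ b - ψ b‖ :=
            (ofReal_norm _).symm
        _ ≤ ENNReal.ofReal (1 / (t * r)) := by
            apply ENNReal.ofReal_le_ofReal
            rw [hθnorm b]
            calc t⁻¹ * ‖θ b‖ ≤ t⁻¹ * (1 / r) := by
                  exact mul_le_mul_of_nonneg_left h2 htinv
              _ = 1 / (t * r) := by field_simp
    set P : {p : (A →L[ℂ] ℂ) × (A →L[ℂ] ℂ) // IsState p.1 ∧ IsState p.2 ∧ p.1 ≠ p.2} :=
      ⟨(φ, ψ), hφstate, hψstate, hφψne⟩ with hP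
    have hterm : (‖φ a - ψ a‖₊ : ℝ≥0∞) / rho L φ ψ ≤ M := by
      refine le_trans ?_ hLrho
      exact le_iSup (fun p : {p : (A →L[ℂ] ℂ) × (A →L[ℂ] ℂ) //
        IsState p.1 ∧ IsState p.2 ∧ p.1 ≠ p.2} =>
        (‖p.1.1 a - p.1.2 a‖₊ : ℝ≥0∞) / rho L p.1.1 p.1.2) P
    by_cases hρ0 : rho L φ ψ = 0
    · have hdiv : (‖φ a - ψ a‖₊ : ℝ≥0∞) / 0 ≤ M := hρ0 ▸ hterm
      have hnum : φ a - ψ a = 0 := by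
        by_contra hne
        have h0 : (‖φ a - ψ a‖₊ : ℝ≥0∞) ≠ 0 := by
          simpa using hne
        rw [ENNReal.div_zero h0] at hdiv
        exact hM (top_le_iff.mp hdiv)
      rw [hθab a, hnum, mul_zero, norm_zero]
      exact hMr
    · have hρtop : rho L φ ψ ≠ ⊤ := ne_top_of_le_ne_top ENNReal.ofReal_ne_top hρ
      have hnum : (‖φ a - ψ a‖₊ : ℝ≥0∞) ≤ M * rho L φ ψ :=
        (ENNReal.div_le_iff_le_mul (Or.inl hρ0) (Or.inl hρtop)).mp hterm
      have hnum2 : (‖φ a - ψ a‖₊ : ℝ≥0∞) ≤ ENNReal.ofReal (M.toReal * (1 / (t * r))) := by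
        calc (‖φ a - ψ a‖₊ : ℝ≥0∞) ≤ M * rho L φ ψ := hnum
          _ ≤ M * ENNReal.ofReal (1 / (t * r)) := mul_le_mul_right hρ _
          _ = ENNReal.ofReal M.toReal * ENNReal.ofReal (1 / (t * r)) := by
              rw [ENNReal.ofReal_toReal hM]
          _ = ENNReal.ofReal (M.toReal * (1 / (t * r))) :=
              (ENNReal.ofReal_mul ENNReal.toReal_nonneg).symm
      have hreal : ‖φ a - ψ a‖ ≤ M.toReal * (1 / (t * r)) := by
        rw [← enorm_eq_nnnorm, ← ofReal_norm] at hnum2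
        exact (ENNReal.ofReal_le_ofReal_iff (by positivity)).mp hnum2
      have hfin : ‖θ a‖ = t * ‖φ a - ψ a‖ := by
        rw [hθab a, norm_mul, Complex.norm_real, Real.norm_eq_abs, abs_of_pos ht]
      rw [hfin]
      calc t * ‖φ a - ψ a‖ ≤ t * (M.toReal * (1 / (t * r))) :=
            mul_le_mul_of_nonneg_left hreal ht.le
        _ = M.toReal / r := by field_simp

end Stmt5Aux

/-- **Lemma 3.1.** For a lower semicontinuous Lipschitz seminorm `L` on a unital
C*-algebra, `L_{ρ_L} ≤ L ≤ 2 L_{ρ_L}`. -/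
theorem stmt_5 {A : Type*} [NormedRing A] [StarRing A] [CStarRing A]
    [NormedAlgebra ℂ A] [StarModule ℂ A] [CompleteSpace A]
    (L : A → ℝ≥0∞)
    (hadd : ∀ a b : A, L (a + b) ≤ L a + L b)
    (hsmul : ∀ (c : ℂ) (a : A), L (c • a) = (‖c‖₊ : ℝ≥0∞) * L a)
    (hstar : ∀ a : A, L (star a) = L a)
    (hnull : ∀ a : A, L a = 0 ↔ ∃ c : ℂ, a = c • (1 : A))
    (hlsc : IsClosed {a : A | L a ≤ 1}) :
    ∀ a : A, Lrho L a ≤ L a ∧ L a ≤ 2 * Lrho L a := by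
  intro a
  rcases subsingleton_or_nontrivial A with hsub | hnt
  · -- trivial algebra
    have hL : L a = 0 := (hnull a).mpr ⟨0, Subsingleton.elim _ _⟩
    have hempty : IsEmpty {p : (A →L[ℂ] ℂ) × (A →L[ℂ] ℂ) //
        IsState p.1 ∧ IsState p.2 ∧ p.1 ≠ p.2} := by
      constructor
      rintro ⟨⟨φ, ψ⟩, hφ, -, -⟩
      have h1 : (1 : A) = 0 := Subsingleton.elim _ _
      have h2 := hφ.1
      rw [h1, map_zero] at h2
      exact one_ne_zero h2.symm
    have hLr : Lrho L a = 0 := by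
      simp only [Lrho]
      exact iSup_of_empty _
    rw [hL, hLr]
    simp
  constructor
  · -- part 1 : Lrho L a ≤ L a
    simp only [Lrho]
    apply iSup_le
    rintro ⟨⟨φ, ψ⟩, hφ, hψ, hne⟩
    dsimp only
    rcases eq_or_ne (L a) ⊤ with htop | htop
    · rw [htop]; exact le_top
    by_cases h0 : L a = 0
    · obtain ⟨c, rfl⟩ := (hnull a).mp h0
      have hval : φ (c • (1:A)) = ψ (c • (1:A)) := by
        rw [map_smul, map_smul, hφ.1, hψ.1]
      rw [hval, sub_self]
      simp
    · set l := (L a).toReal with hl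
      have hl0 : 0 < l := ENNReal.toReal_pos h0 htop
      have hLa : L a = ENNReal.ofReal l := (ENNReal.ofReal_toReal htop).symm
      set b := ((l⁻¹ : ℝ) : ℂ) • a with hb
      have hLb : L b ≤ 1 := by
        rw [hb, hsmul]
        have h1 : (‖((l⁻¹ : ℝ) : ℂ)‖₊ : ℝ≥0∞) = ENNReal.ofReal l⁻¹ := by
          rw [← enorm_eq_nnnorm, ← ofReal_norm, Complex.norm_real, Real.norm_eq_abs,
            abs_of_pos (by positivity)]
        rw [h1, hLa, ← ENNReal.ofReal_mul (by positivity), inv_mul_cancel₀ hl0.ne']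
        simp
      have hsup : (‖φ b - ψ b‖₊ : ℝ≥0∞) ≤ rho L φ ψ :=
        le_iSup (fun x : {a : A // L a ≤ 1} => (‖φ x.1 - ψ x.1‖₊ : ℝ≥0∞)) ⟨b, hLb⟩
      have ha : a = (l : ℂ) • b := by
        rw [hb, smul_smul]
        have h1 : ((l : ℂ)) * ((l⁻¹ : ℝ) : ℂ) = 1 := by
          push_cast
          exact mul_inv_cancel₀ (by exact_mod_cast hl0.ne')
        rw [h1, one_smul]
      have hnn : (‖φ a - ψ a‖₊ : ℝ≥0∞) = ENNReal.ofReal l * (‖φ b - ψ b‖₊ : ℝ≥0∞) := by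
        have hφ' : φ b = ((l⁻¹ : ℝ) : ℂ) * φ a := by rw [hb, map_smul, smul_eq_mul]
        have hψ' : ψ b = ((l⁻¹ : ℝ) : ℂ) * ψ a := by rw [hb, map_smul, smul_eq_mul]
        have hll : ((l : ℝ) : ℂ) * ((l⁻¹ : ℝ) : ℂ) = 1 := by
          push_cast
          exact mul_inv_cancel₀ (by exact_mod_cast hl0.ne')
        have h2 : φ a - ψ a = ((l : ℝ) : ℂ) * (φ b - ψ b) := by
          rw [hφ', hψ']
          linear_combination (ψ a - φ a) * hll
        rw [h2, nnnorm_mul, ENNReal.coe_mul]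
        congr 1
        rw [← enorm_eq_nnnorm, ← ofReal_norm, Complex.norm_real, Real.norm_eq_abs,
          abs_of_pos hl0]
      refine (ENNReal.div_le_iff_le_mul (Or.inr htop) (Or.inr h0)).mpr ?_
      rw [hnn, hLa]
      exact mul_le_mul_right hsup _
  · -- part 2 : L a ≤ 2 * Lrho L a
    by_cases hM : Lrho L a = ⊤
    · rw [hM]
      have h2 : (2 : ℝ≥0∞) * ⊤ = ⊤ := by simp
      rw [h2]
      exact le_top
    by_contra hcon
    push_neg at hcon
    have h2M : (2 : ℝ≥0∞) * Lrho L a ≠ ⊤ := ENNReal.mul_ne_top (by simp) hM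
    obtain ⟨r, hr0', hra, hrb⟩ := ENNReal.lt_iff_exists_real_btwn.mp hcon
    have hr0 : 0 < r := by
      have := lt_of_le_of_lt (zero_le : (0:ℝ≥0∞) ≤ (2:ℝ≥0∞) * Lrho L a) hra
      exact ENNReal.ofReal_pos.mp this
    have hrgt : 2 * (Lrho L a).toReal < r := by
      have h1 := (ENNReal.lt_ofReal_iff_toReal_lt h2M).mp hra
      rw [ENNReal.toReal_mul] at h1
      norm_num at h1
      exact h1
    set C := {x : A | L x ≤ ENNReal.ofReal r} with hC
    have haC : a ∉ C := fun h => absurd hrb (not_lt.mpr h)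
    have hCeq : C = (fun x : A => ((r⁻¹ : ℝ) : ℂ) • x) ⁻¹' {x : A | L x ≤ 1} := by
      ext x
      simp only [Set.mem_preimage, Set.mem_setOf_eq, hC]
      rw [hsmul]
      have h1 : (‖((r⁻¹ : ℝ) : ℂ)‖₊ : ℝ≥0∞) = (ENNReal.ofReal r)⁻¹ := by
        rw [← enorm_eq_nnnorm, ← ofReal_norm, Complex.norm_real, Real.norm_eq_abs,
          abs_of_pos (by positivity), ENNReal.ofReal_inv_of_pos hr0]
      have hne0 : ENNReal.ofReal r ≠ 0 := ne_of_gt (ENNReal.ofReal_pos.mpr hr0)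
      rw [h1, ← ENNReal.div_eq_inv_mul,
        ENNReal.div_le_iff_le_mul (Or.inl hne0) (Or.inl ENNReal.ofReal_ne_top), one_mul]
    have hCclosed : IsClosed C := by
      rw [hCeq]
      exact hlsc.preimage (continuous_const_smul _)
    have hCconvex : Convex ℝ C := by
      rintro x hx y hy s v hs hv hsv
      show L (s • x + v • y) ≤ ENNReal.ofReal r
      have hsmulr : ∀ (w : ℝ) (z : A), 0 ≤ w → L (w • z) = ENNReal.ofReal w * L z := by
        intro w z hw
        rw [← Complex.coe_smul, hsmul, ← enorm_eq_nnnorm, ← ofReal_norm, Complex.norm_real,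
          Real.norm_eq_abs, abs_of_nonneg hw]
      calc L (s • x + v • y) ≤ L (s • x) + L (v • y) := hadd _ _
        _ = ENNReal.ofReal s * L x + ENNReal.ofReal v * L y := by
            rw [hsmulr s x hs, hsmulr v y hv]
        _ ≤ ENNReal.ofReal s * ENNReal.ofReal r + ENNReal.ofReal v * ENNReal.ofReal r :=
            add_le_add (mul_le_mul_right hx _) (mul_le_mul_right hy _)
        _ = ENNReal.ofReal ((s + v) * r) := by
            rw [← ENNReal.ofReal_mul hs, ← ENNReal.ofReal_mul hv,
              ← ENNReal.ofReal_add (by positivity) (by positivity), ← add_mul]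
        _ = ENNReal.ofReal r := by rw [hsv, one_mul]
    obtain ⟨f₀, u, hfu, hua⟩ := geometric_hahn_banach_closed_point hCconvex hCclosed haC
    have h0C : (0 : A) ∈ C := by
      show L 0 ≤ _
      have h1 : L (0 : A) = 0 := (hnull 0).mpr ⟨0, by simp⟩
      simp [h1]
    have hu0 : 0 < u := by simpa using hfu 0 h0C
    have hbal : ∀ x ∈ C, ∀ c : ℂ, ‖c‖ ≤ 1 → c • x ∈ C := by
      intro x hx c hc
      show L (c • x) ≤ _
      rw [hsmul]
      have hc' : (‖c‖₊ : ℝ≥0∞) ≤ 1 := by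
        rw [← enorm_eq_nnnorm, ← ofReal_norm]
        calc ENNReal.ofReal ‖c‖ ≤ ENNReal.ofReal 1 := ENNReal.ofReal_le_ofReal hc
          _ = 1 := ENNReal.ofReal_one
      calc (‖c‖₊ : ℝ≥0∞) * L x ≤ 1 * L x := mul_le_mul_left hc' _
        _ = L x := one_mul _
        _ ≤ ENNReal.ofReal r := hx
    set F : A →L[ℂ] ℂ := f₀.extendTo𝕜' with hF
    have hFre : ∀ x, (F x).re = f₀ x := by
      intro x
      have h := ContinuousLinearMap.extendTo𝕜'_apply (𝕜 := ℂ) f₀ x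
      rw [show F x = _ from h]
      simp
    have hFC : ∀ x ∈ C, ‖F x‖ ≤ u := by
      intro x hx
      rcases eq_or_ne (F x) 0 with h0 | h0
      · rw [h0, norm_zero]; exact hu0.le
      · set c : ℂ := (‖F x‖ : ℂ) / F x with hc
        have hcnorm : ‖c‖ = 1 := by
          rw [hc, norm_div, Complex.norm_real, Real.norm_eq_abs,
            abs_of_nonneg (norm_nonneg _)]
          exact div_self (norm_ne_zero_iff.mpr h0)
        have hmem := hbal x hx c (le_of_eq hcnorm)
        have hfc : F (c • x) = (‖F x‖ : ℂ) := by
          rw [map_smul, smul_eq_mul, hc, div_mul_cancel₀ _ h0]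
        have h2 := hfu _ hmem
        rw [← hFre, hfc] at h2
        simpa using h2.le
    have hFa : u < ‖F a‖ := by
      have h1 : f₀ a ≤ ‖F a‖ := by
        rw [← hFre a]
        exact Complex.re_le_norm _
      linarith [hua]
    set f : A →L[ℂ] ℂ := ((u⁻¹ : ℝ) : ℂ) • F with hf
    have hfC : ∀ x ∈ C, ‖f x‖ ≤ 1 := by
      intro x hx
      rw [hf]
      simp only [ContinuousLinearMap.smul_apply, norm_smul, Complex.norm_real,
        Real.norm_eq_abs, abs_of_nonneg (by positivity : (0:ℝ) ≤ u⁻¹)]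
      calc u⁻¹ * ‖F x‖ ≤ u⁻¹ * u := mul_le_mul_of_nonneg_left (hFC x hx) (by positivity)
        _ = 1 := inv_mul_cancel₀ hu0.ne'
    have hfa : 1 < ‖f a‖ := by
      rw [hf]
      simp only [ContinuousLinearMap.smul_apply, norm_smul, Complex.norm_real,
        Real.norm_eq_abs, abs_of_nonneg (by positivity : (0:ℝ) ≤ u⁻¹)]
      rw [← inv_mul_cancel₀ hu0.ne']
      exact mul_lt_mul_of_pos_left hFa (by positivity)
    have hf1 : f 1 = 0 := by
      by_contra h1
      have hmem : ∀ c : ℂ, c • (1:A) ∈ C := by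
        intro c
        show L _ ≤ _
        rw [hsmul]
        have h2 : L (1:A) = 0 := (hnull 1).mpr ⟨1, by simp⟩
        simp [h2]
      have h2 := hfC _ (hmem ((2 / ‖f 1‖ : ℝ) : ℂ))
      rw [map_smul, smul_eq_mul, norm_mul, Complex.norm_real, Real.norm_eq_abs,
        abs_of_nonneg (by positivity)] at h2
      have hne : ‖f 1‖ ≠ 0 := norm_ne_zero_iff.mpr h1
      rw [div_mul_cancel₀ _ hne] at h2
      linarith
    set g := Stmt5Aux.hermPart f with hg
    set h := Stmt5Aux.hermPart ((-Complex.I) • f) with hh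
    have hgb : ∀ b : A, L b ≤ ENNReal.ofReal r → ‖g b‖ ≤ 1 := by
      intro b hb
      have hb' : star b ∈ C := by
        show L _ ≤ _
        rw [hstar]
        exact hb
      calc ‖g b‖ ≤ 2⁻¹ * (‖f b‖ + ‖f (star b)‖) := Stmt5Aux.norm_hermPart_le f b
        _ ≤ 2⁻¹ * (1 + 1) := by
            have h1 := hfC b hb
            have h2 := hfC _ hb'
            linarith
        _ = 1 := by norm_num
    have hhb : ∀ b : A, L b ≤ ENNReal.ofReal r → ‖h b‖ ≤ 1 := by
      intro b hb
      have hb' : star b ∈ C := by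
        show L _ ≤ _
        rw [hstar]
        exact hb
      calc ‖h b‖ ≤ 2⁻¹ * (‖((-Complex.I) • f) b‖ + ‖((-Complex.I) • f) (star b)‖) :=
            Stmt5Aux.norm_hermPart_le _ b
        _ ≤ 2⁻¹ * (1 + 1) := by
            have h1 : ‖((-Complex.I) • f) b‖ = ‖f b‖ := by
              simp [norm_smul]
            have h2 : ‖((-Complex.I) • f) (star b)‖ = ‖f (star b)‖ := by
              simp [norm_smul]
            have h3 := hfC b hb
            have h4 := hfC _ hb'
            rw [h1, h2]
            linarith
        _ = 1 := by norm_num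
    have hga := Stmt5Aux.herm_bound L hsmul hM (le_refl (Lrho L a)) hr0 g
      (Stmt5Aux.hermPart_herm f) (Stmt5Aux.hermPart_one f hf1) hgb
    have hIf1 : ((-Complex.I) • f) 1 = 0 := by
      simp [hf1]
    have hha := Stmt5Aux.herm_bound L hsmul hM (le_refl (Lrho L a)) hr0 h
      (Stmt5Aux.hermPart_herm _) (Stmt5Aux.hermPart_one _ hIf1) hhb
    have hdec : ‖f a‖ ≤ ‖g a‖ + ‖h a‖ := by
      rw [Stmt5Aux.hermPart_decomp f a]
      calc ‖g a + Complex.I * h a‖ ≤ ‖g a‖ + ‖Complex.I * h a‖ := norm_add_le _ _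
        _ = ‖g a‖ + ‖h a‖ := by rw [norm_mul, Complex.norm_I, one_mul]
    have hfinal : (1:ℝ) < 2 * ((Lrho L a).toReal / r) := by
      calc (1:ℝ) < ‖f a‖ := hfa
        _ ≤ ‖g a‖ + ‖h a‖ := hdec
        _ ≤ (Lrho L a).toReal / r + (Lrho L a).toReal / r := add_le_add hga hha
        _ = 2 * ((Lrho L a).toReal / r) := by ring
    have hlast : r < 2 * (Lrho L a).toReal := by
      have h1 : r * 1 < r * (2 * ((Lrho L a).toReal / r)) :=
        mul_lt_mul_of_pos_left hfinal hr0
      rw [mul_one] at h1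
      calc r < r * (2 * ((Lrho L a).toReal / r)) := h1
        _ = 2 * (Lrho L a).toReal := by field_simp
    linarith [hrgt]
end
end

section
/- Let A₁, A₂ be unital C*-algebras with lower semicontinuous Leibniz Lipschitz seminorms L₁, L₂ (with L(a*)=L(a)), let 𝒜ᵢ = {a : Lᵢ(a) < ∞}, and define Mᵢ(a) = ‖a‖ᵢ + Lᵢ(a). If α : A₁ → A₂ is a *-homomorphism with α(𝒜₁) ⊆ 𝒜₂, then there is a constant λ > 0 such that M₂(α(a)) ≤ λ M₁(a) for all a ∈ 𝒜₁; that is, α restricts to a bounded map (𝒜₁, M₁) → (𝒜₂, M₂). -/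
open scoped ENNReal NNReal ComplexOrder

noncomputable section

section AuxLip

/-- Auxiliary data: a homogeneous, subadditive, lower semicontinuous `ℝ≥0∞`-valued
seminorm on a normed `ℂ`-algebra. -/
structure LipData (A : Type*) [NormedRing A] [NormedAlgebra ℂ A] where
  L : A → ℝ≥0∞
  add_le : ∀ a b : A, L (a + b) ≤ L a + L b
  smul_eq : ∀ (c : ℂ) (a : A), L (c • a) = (‖c‖₊ : ℝ≥0∞) * L a
  lsc : IsClosed {a : A | L a ≤ 1}

namespace LipData

variable {A : Type*} [NormedRing A] [NormedAlgebra ℂ A] (P : LipData A)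

lemma L_zero : P.L 0 = 0 := by
  have h := P.smul_eq 0 0
  simpa using h

lemma L_neg (a : A) : P.L (-a) = P.L a := by
  have h := P.smul_eq (-1) a
  simpa using h

lemma L_sub_le (a b : A) : P.L (a - b) ≤ P.L a + P.L b := by
  rw [sub_eq_add_neg]
  exact (P.add_le a (-b)).trans (by rw [P.L_neg])

/-- The submodule of Lipschitz elements. -/
def sub : Submodule ℂ A where
  carrier := {a | P.L a ≠ ∞}
  add_mem' := fun {a b} ha hb =>
    ne_top_of_le_ne_top (ENNReal.add_ne_top.2 ⟨ha, hb⟩) (P.add_le a b)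
  zero_mem' := by simp [Set.mem_setOf_eq, P.L_zero]
  smul_mem' := fun c a ha => by
    simp only [Set.mem_setOf_eq, P.smul_eq]
    exact ENNReal.mul_ne_top ENNReal.coe_ne_top ha

/-- The type of Lipschitz elements, as a fresh type carrying the norm `M`. -/
def Elem := ↥P.sub

instance : AddCommGroup P.Elem := inferInstanceAs (AddCommGroup ↥P.sub)
instance : Module ℂ P.Elem := inferInstanceAs (Module ℂ ↥P.sub)

variable {P}

/-- The underlying element of `A`. -/
def Elem.val (x : P.Elem) : A := Subtype.val x

lemma Elem.L_ne_top (x : P.Elem) : P.L x.val ≠ ∞ := x.2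

@[simp] lemma Elem.val_add (x y : P.Elem) : (x + y).val = x.val + y.val := rfl
@[simp] lemma Elem.val_sub (x y : P.Elem) : (x - y).val = x.val - y.val := rfl
@[simp] lemma Elem.val_neg (x : P.Elem) : (-x).val = -x.val := rfl
@[simp] lemma Elem.val_zero : (0 : P.Elem).val = 0 := rfl
@[simp] lemma Elem.val_smul (c : ℂ) (x : P.Elem) : (c • x).val = c • x.val := rfl

lemma Elem.ext {x y : P.Elem} (h : x.val = y.val) : x = y := Subtype.ext h

variable (P)

instance : NormedAddCommGroup P.Elem :=
  AddGroupNorm.toNormedAddCommGroup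
    { toFun := fun x => ‖x.val‖ + (P.L x.val).toReal
      map_zero' := by simp [P.L_zero]
      add_le' := fun x y => by
        have h1 : ‖(x + y).val‖ ≤ ‖x.val‖ + ‖y.val‖ := by
          rw [Elem.val_add]; exact norm_add_le _ _
        have h2 : (P.L ((x + y).val)).toReal ≤ (P.L x.val).toReal + (P.L y.val).toReal := by
          rw [Elem.val_add]
          have h3 := ENNReal.toReal_mono (ENNReal.add_ne_top.2 ⟨x.L_ne_top, y.L_ne_top⟩)
            (P.add_le x.val y.val)
          rwa [ENNReal.toReal_add x.L_ne_top y.L_ne_top] at h3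
        linarith
      neg' := fun x => by rw [Elem.val_neg, norm_neg, P.L_neg]
      eq_zero_of_map_eq_zero' := fun x h => by
        have h' : ‖x.val‖ + (P.L x.val).toReal = 0 := h
        have h1 : (0:ℝ) ≤ (P.L x.val).toReal := ENNReal.toReal_nonneg
        have h2 : (0:ℝ) ≤ ‖x.val‖ := norm_nonneg _
        have h3 : ‖x.val‖ = 0 := by linarith [h']
        exact Elem.ext (by simpa using h3) }

lemma Elem.norm_def (x : P.Elem) : ‖x‖ = ‖x.val‖ + (P.L x.val).toReal := rfl

instance : NormedSpace ℂ P.Elem :=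
  ⟨fun c x => by
    rw [Elem.norm_def, Elem.norm_def, Elem.val_smul, norm_smul, P.smul_eq,
      ENNReal.toReal_mul, ENNReal.coe_toReal, coe_nnnorm, mul_add]⟩

lemma lipschitz_val : LipschitzWith 1 (fun x : P.Elem => x.val) := by
  apply LipschitzWith.of_dist_le_mul
  intro x y
  rw [NNReal.coe_one, one_mul, dist_eq_norm, dist_eq_norm, Elem.norm_def, ← Elem.val_sub]
  exact le_add_of_nonneg_right ENNReal.toReal_nonneg

lemma continuous_val : Continuous (fun x : P.Elem => x.val) :=
  (P.lipschitz_val).continuous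

lemma closed_sublevel {t : ℝ≥0} (ht : t ≠ 0) : IsClosed {a : A | P.L a ≤ t} := by
  have key : {a : A | P.L a ≤ t} =
      (fun a : A => ((((t : ℝ≥0)⁻¹ : ℝ≥0) : ℝ) : ℂ) • a) ⁻¹' {a | P.L a ≤ 1} := by
    ext a
    simp only [Set.mem_setOf_eq, Set.mem_preimage, P.smul_eq]
    have hnn : (‖((((t : ℝ≥0)⁻¹ : ℝ≥0) : ℝ) : ℂ)‖₊ : ℝ≥0∞) = ((t : ℝ≥0∞))⁻¹ := by
      rw [Complex.nnnorm_real, NNReal.nnnorm_eq, ENNReal.coe_inv ht]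
    rw [hnn, ENNReal.inv_mul_le_iff (by exact_mod_cast ht) ENNReal.coe_ne_top, mul_one]
  rw [key]
  exact P.lsc.preimage (continuous_const_smul _)

instance [CompleteSpace A] : CompleteSpace P.Elem := by
  apply Metric.complete_of_cauchySeq_tendsto
  intro u hu
  have hval : CauchySeq fun n => (u n).val :=
    (P.lipschitz_val.uniformContinuous).comp_cauchySeq hu
  obtain ⟨a, ha⟩ := cauchySeq_tendsto_of_complete hval
  have key : ∀ ε : ℝ≥0, 0 < ε → ∃ N, ∀ n ≥ N, P.L ((u n).val - a) ≤ ε := by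
    intro ε hε
    obtain ⟨N, hN⟩ := Metric.cauchySeq_iff.1 hu ε (by exact_mod_cast hε)
    refine ⟨N, fun n hn => ?_⟩
    have hm : ∀ m ≥ N, P.L ((u n).val - (u m).val) ≤ ε := by
      intro m hm'
      have hd := hN n hn m hm'
      rw [dist_eq_norm, Elem.norm_def, Elem.val_sub] at hd
      have hfin : P.L ((u n).val - (u m).val) ≠ ∞ := by
        have hx := (u n - u m).L_ne_top
        rwa [Elem.val_sub] at hx
      have htr : (P.L ((u n).val - (u m).val)).toReal ≤ (ε : ℝ) := by
        have := norm_nonneg ((u n).val - (u m).val)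
        linarith
      exact (ENNReal.toReal_le_toReal hfin ENNReal.coe_ne_top).1
        (by rwa [ENNReal.coe_toReal])
    have hten : Filter.Tendsto (fun m => (u n).val - (u m).val) Filter.atTop
        (nhds ((u n).val - a)) := tendsto_const_nhds.sub ha
    exact (P.closed_sublevel hε.ne').mem_of_tendsto hten (Filter.eventually_atTop.2 ⟨N, hm⟩)
  have haf : P.L a ≠ ∞ := by
    obtain ⟨N, hN⟩ := key 1 one_pos
    have h1 : P.L ((u N).val - a) ≤ 1 := by simpa using hN N le_rfl
    have h2 := P.L_sub_le (u N).val ((u N).val - a)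
    rw [sub_sub_cancel] at h2
    exact ne_top_of_le_ne_top (ENNReal.add_ne_top.2
      ⟨(u N).L_ne_top, ne_top_of_le_ne_top ENNReal.one_ne_top h1⟩) h2
  refine ⟨⟨a, haf⟩, Metric.tendsto_atTop.2 fun ε hε => ?_⟩
  obtain ⟨N₁, hN₁⟩ := key (Real.toNNReal (ε / 3)) (Real.toNNReal_pos.2 (by linarith))
  obtain ⟨N₂, hN₂⟩ := Metric.tendsto_atTop.1 ha (ε / 3) (by linarith)
  refine ⟨max N₁ N₂, fun n hn => ?_⟩
  have h1 : ‖(u n).val - a‖ < ε / 3 := by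
    have := hN₂ n (le_trans (le_max_right _ _) hn)
    rwa [dist_eq_norm] at this
  have h2 : P.L ((u n).val - a) ≤ (Real.toNNReal (ε / 3) : ℝ≥0∞) :=
    hN₁ n (le_trans (le_max_left _ _) hn)
  have h2' : (P.L ((u n).val - a)).toReal ≤ ε / 3 := by
    have h3 := ENNReal.toReal_mono ENNReal.coe_ne_top h2
    rwa [ENNReal.coe_toReal, Real.coe_toNNReal _ (by linarith)] at h3
  have hd : dist (u n) ⟨a, haf⟩ = ‖u n - ⟨a, haf⟩‖ := dist_eq_norm _ _
  rw [hd, Elem.norm_def]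
  show ‖(u n).val - a‖ + (P.L ((u n).val - a)).toReal < ε
  linarith

end LipData

end AuxLip

/-- **Proposition 3.2.** Automatic continuity: a *-homomorphism between unital C*-algebras
with lower semicontinuous Leibniz Lipschitz seminorms, mapping Lipschitz elements to
Lipschitz elements, is bounded for the norms `Mᵢ(a) = ‖a‖ + Lᵢ(a)` on the Lipschitz
subalgebras. -/
theorem stmt_9 {A₁ A₂ : Type*}
    [NormedRing A₁] [StarRing A₁] [CStarRing A₁] [NormedAlgebra ℂ A₁] [StarModule ℂ A₁]
    [CompleteSpace A₁]
    [NormedRing A₂] [StarRing A₂] [CStarRing A₂] [NormedAlgebra ℂ A₂] [StarModule ℂ A₂]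
    [CompleteSpace A₂]
    (L₁ : A₁ → ℝ≥0∞) (L₂ : A₂ → ℝ≥0∞)
    (hadd₁ : ∀ a b : A₁, L₁ (a + b) ≤ L₁ a + L₁ b)
    (hsmul₁ : ∀ (c : ℂ) (a : A₁), L₁ (c • a) = (‖c‖₊ : ℝ≥0∞) * L₁ a)
    (hstar₁ : ∀ a : A₁, L₁ (star a) = L₁ a)
    (hnull₁ : ∀ a : A₁, L₁ a = 0 ↔ ∃ c : ℂ, a = c • (1 : A₁))
    (hLeib₁ : IsLeibniz L₁) (hlsc₁ : IsClosed {a : A₁ | L₁ a ≤ 1})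
    (hadd₂ : ∀ a b : A₂, L₂ (a + b) ≤ L₂ a + L₂ b)
    (hsmul₂ : ∀ (c : ℂ) (a : A₂), L₂ (c • a) = (‖c‖₊ : ℝ≥0∞) * L₂ a)
    (hstar₂ : ∀ a : A₂, L₂ (star a) = L₂ a)
    (hnull₂ : ∀ a : A₂, L₂ a = 0 ↔ ∃ c : ℂ, a = c • (1 : A₂))
    (hLeib₂ : IsLeibniz L₂) (hlsc₂ : IsClosed {a : A₂ | L₂ a ≤ 1})
    (α : A₁ →⋆ₐ[ℂ] A₂) (hα : ∀ a : A₁, L₁ a ≠ ∞ → L₂ (α a) ≠ ∞) :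
    ∃ lam : ℝ, 0 < lam ∧ ∀ a : A₁, L₁ a ≠ ∞ →
      ‖α a‖ + (L₂ (α a)).toReal ≤ lam * (‖a‖ + (L₁ a).toReal) := by
  
  classical
  set P₁ : LipData A₁ := ⟨L₁, hadd₁, hsmul₁, hlsc₁⟩ with hP₁
  set P₂ : LipData A₂ := ⟨L₂, hadd₂, hsmul₂, hlsc₂⟩ with hP₂
  letI : CStarAlgebra A₁ := {}
  letI : CStarAlgebra A₂ := {}
  have hαc : Continuous α :=
    AddMonoidHomClass.continuous_of_bound α 1
      (fun a => by simpa using NonUnitalStarAlgHom.norm_apply_le α a)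
  let T : P₁.Elem →ₗ[ℂ] P₂.Elem :=
    { toFun := fun x => ⟨α x.val, hα x.val x.L_ne_top⟩
      map_add' := fun x y => LipData.Elem.ext
        (by show α (x.val + y.val) = α x.val + α y.val; exact map_add α _ _)
      map_smul' := fun c x => LipData.Elem.ext
        (by show α (c • x.val) = c • α x.val; exact map_smul α _ _) }
  have hval : ∀ x : P₁.Elem, (T x).val = α x.val := fun x => rfl
  have hTcont : Continuous T := by
    apply T.continuous_of_seq_closed_graph
    intro u x y hu hTu
    have h1 : Filter.Tendsto (fun n => (u n).val) Filter.atTop (nhds x.val) :=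
      (P₁.continuous_val.tendsto _).comp hu
    have h2 : Filter.Tendsto (fun n => α ((u n).val)) Filter.atTop (nhds (α x.val)) :=
      (hαc.tendsto _).comp h1
    have h3 : Filter.Tendsto (fun n => (T (u n)).val) Filter.atTop (nhds y.val) :=
      (P₂.continuous_val.tendsto _).comp hTu
    have h4 : (fun n => (T (u n)).val) = fun n => α ((u n).val) := rfl
    rw [h4] at h3
    exact LipData.Elem.ext (tendsto_nhds_unique h3 h2)
  let T' : P₁.Elem →L[ℂ] P₂.Elem := ⟨T, hTcont⟩
  refine ⟨max ‖T'‖ 1, lt_of_lt_of_le one_pos (le_max_right _ _), fun a hfa => ?_⟩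
  set x : P₁.Elem := ⟨a, hfa⟩ with hx
  have e1 : ‖α a‖ + (L₂ (α a)).toReal = ‖T' x‖ := rfl
  have e2 : ‖a‖ + (L₁ a).toReal = ‖x‖ := rfl
  rw [e1, e2]
  calc ‖T' x‖ ≤ ‖T'‖ * ‖x‖ := T'.le_opNorm x
    _ ≤ max ‖T'‖ 1 * ‖x‖ :=
        mul_le_mul_of_nonneg_right (le_max_left _ _) (norm_nonneg _)
end
end
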